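/- Let M be an N×N matrix, r a column vector, c^T a row vector, Γ an N×N matrix, with I+M and aI+Γ, bI+Γ invertible, and suppose c^T (I+M)^{-1}(aI+Γ)^{-1} r = c^T (aI+Γ)^{-1}(I+M)^{-1} r for all a in a set containing a and b (symmetry of V), and S(a,b) := c^T (bI+Γ)^{-1}(I+M)^{-1}(aI+Γ)^{-1} r = S(b,a). If additionally the shifted quantities satisfy (pI-Γ)(I+M̃) = (I+M)(pI-Γ) + r c^T and (pI-Γ) r̃ = (pI+Γ) r, then 1 - (p+b) S̃(a,b) + (p-a) S(a,b) = Ṽ(a) V(b), where V(a) = 1 - c^T (I+M)^{-1}(aI+Γ)^{-1} r. -/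

import Mathlib

set_option maxHeartbeats 1000000


open Matrix

lemma aux_inv_comm {N : ℕ} {A P : Matrix (Fin N) (Fin N) ℂ} (hA : IsUnit A)
    (h : A * P = P * A) : A⁻¹ * P = P * A⁻¹ := by
  have hd : IsUnit A.det := (Matrix.isUnit_iff_isUnit_det A).mp hA
  calc A⁻¹ * P = A⁻¹ * P * (A * A⁻¹) := by rw [Matrix.mul_nonsing_inv A hd, mul_one]
    _ = A⁻¹ * (P * A) * A⁻¹ := by noncomm_ring
    _ = A⁻¹ * (A * P) * A⁻¹ := by rw [h]
    _ = (A⁻¹ * A) * (P * A⁻¹) := by noncomm_ring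
    _ = P * A⁻¹ := by rw [Matrix.nonsing_inv_mul A hd, one_mul]

lemma aux_vecMulVec_mulVec {N : ℕ} (r c x : Fin N → ℂ) :
    (vecMulVec r c).mulVec x = (c ⬝ᵥ x) • r := by
  ext i
  simp [Matrix.mulVec, Matrix.vecMulVec_apply, dotProduct, Finset.sum_mul,
    Finset.mul_sum, mul_comm, mul_left_comm]

/-- The shift relation 1 - (p+b) S̃(a,b) + (p-a) S(a,b) = Ṽ(a) V(b) for
S(a,b) = cᵀ (bI+Γ)⁻¹ (I+M)⁻¹ (aI+Γ)⁻¹ r and V(a) = 1 - cᵀ (I+M)⁻¹ (aI+Γ)⁻¹ r. -/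
theorem Sab_shift_relation (N : ℕ) (p a b : ℂ)
    (Γ M Mt : Matrix (Fin N) (Fin N) ℂ) (r rt c : Fin N → ℂ)
    (hM : IsUnit (1 + M)) (hMt : IsUnit (1 + Mt))
    (ha : IsUnit (a • (1 : Matrix (Fin N) (Fin N) ℂ) + Γ))
    (hb : IsUnit (b • (1 : Matrix (Fin N) (Fin N) ℂ) + Γ))
    (hpm : IsUnit (p • (1 : Matrix (Fin N) (Fin N) ℂ) - Γ))
    (hpp : IsUnit (p • (1 : Matrix (Fin N) (Fin N) ℂ) + Γ))
    -- symmetry of V: (I+M)⁻¹ and (xI+Γ)⁻¹ may be exchanged under cᵀ · r, for x = a, b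
    (hVsym : ∀ x ∈ ({a, b} : Set ℂ),
      c ⬝ᵥ (((1 + M)⁻¹ * (x • (1 : Matrix (Fin N) (Fin N) ℂ) + Γ)⁻¹).mulVec r)
        = c ⬝ᵥ (((x • (1 : Matrix (Fin N) (Fin N) ℂ) + Γ)⁻¹ * (1 + M)⁻¹).mulVec r))
    -- symmetry of S: S(a,b) = S(b,a)
    (hSsym :
      c ⬝ᵥ (((b • (1 : Matrix (Fin N) (Fin N) ℂ) + Γ)⁻¹ * (1 + M)⁻¹
          * (a • (1 : Matrix (Fin N) (Fin N) ℂ) + Γ)⁻¹).mulVec r)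
        = c ⬝ᵥ (((a • (1 : Matrix (Fin N) (Fin N) ℂ) + Γ)⁻¹ * (1 + M)⁻¹
          * (b • (1 : Matrix (Fin N) (Fin N) ℂ) + Γ)⁻¹).mulVec r))
    (hexch : (p • (1 : Matrix (Fin N) (Fin N) ℂ) - Γ) * (1 + Mt)
        = (1 + M) * (p • (1 : Matrix (Fin N) (Fin N) ℂ) - Γ) + vecMulVec r c)
    (hr : (p • (1 : Matrix (Fin N) (Fin N) ℂ) - Γ).mulVec rt
        = (p • (1 : Matrix (Fin N) (Fin N) ℂ) + Γ).mulVec r) :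
    let S : Matrix (Fin N) (Fin N) ℂ → (Fin N → ℂ) → ℂ := fun X y =>
      c ⬝ᵥ (((b • (1 : Matrix (Fin N) (Fin N) ℂ) + Γ)⁻¹ * (1 + X)⁻¹
          * (a • (1 : Matrix (Fin N) (Fin N) ℂ) + Γ)⁻¹).mulVec y)
    let V : ℂ → Matrix (Fin N) (Fin N) ℂ → (Fin N → ℂ) → ℂ := fun x X y =>
      1 - c ⬝ᵥ (((1 + X)⁻¹ * (x • (1 : Matrix (Fin N) (Fin N) ℂ) + Γ)⁻¹).mulVec y)
    1 - (p + b) * S Mt rt + (p - a) * S M r = V a Mt rt * V b M r := by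
  intro S V
  set A : Matrix (Fin N) (Fin N) ℂ := a • (1 : Matrix (Fin N) (Fin N) ℂ) + Γ with hA
  set B : Matrix (Fin N) (Fin N) ℂ := b • (1 : Matrix (Fin N) (Fin N) ℂ) + Γ with hB
  set Pm : Matrix (Fin N) (Fin N) ℂ := p • (1 : Matrix (Fin N) (Fin N) ℂ) - Γ with hPm
  set Pp : Matrix (Fin N) (Fin N) ℂ := p • (1 : Matrix (Fin N) (Fin N) ℂ) + Γ with hPp
  have hAd : IsUnit A.det := (Matrix.isUnit_iff_isUnit_det A).mp ha
  have hBd : IsUnit B.det := (Matrix.isUnit_iff_isUnit_det B).mp hb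
  have hMd : IsUnit (1 + M).det := (Matrix.isUnit_iff_isUnit_det _).mp hM
  have hMtd : IsUnit (1 + Mt).det := (Matrix.isUnit_iff_isUnit_det _).mp hMt
  -- commutation of A⁻¹ with Pm
  have hcomm : A * Pm = Pm * A := by
    rw [hA, hPm]
    simp only [mul_sub, sub_mul, mul_add, add_mul, Matrix.smul_mul, Matrix.mul_smul,
      one_mul, mul_one, smul_smul]
    rw [mul_comm a p]; abel
  have hAinvPm : A⁻¹ * Pm = Pm * A⁻¹ := aux_inv_comm ha hcomm
  -- the vector x
  set x : Fin N → ℂ := ((1 + Mt)⁻¹ * A⁻¹).mulVec rt with hx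
  set t : ℂ := c ⬝ᵥ x with ht
  -- key vector identity
  have key : ((1 + M) * Pm).mulVec x = A⁻¹.mulVec (Pp.mulVec r) - t • r := by
    have h1 : (1 + Mt).mulVec x = A⁻¹.mulVec rt := by
      rw [hx, Matrix.mulVec_mulVec, ← Matrix.mul_assoc,
        Matrix.mul_nonsing_inv _ hMtd, Matrix.one_mul]
    have h2 : ((1 + M) * Pm).mulVec x
        = (Pm * (1 + Mt)).mulVec x - (vecMulVec r c).mulVec x := by
      rw [hexch, Matrix.add_mulVec]; abel
    rw [h2, ← Matrix.mulVec_mulVec, h1, Matrix.mulVec_mulVec, ← hAinvPm,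
      ← Matrix.mulVec_mulVec, hr, aux_vecMulVec_mulVec, ← ht, Matrix.mulVec_mulVec]
  -- apply c ⬝ᵥ (B⁻¹ * (1+M)⁻¹) *ᵥ _ to key
  have key2 : c ⬝ᵥ ((B⁻¹ * (1 + M)⁻¹).mulVec (((1 + M) * Pm).mulVec x))
      = c ⬝ᵥ ((B⁻¹ * (1 + M)⁻¹).mulVec (A⁻¹.mulVec (Pp.mulVec r) - t • r)) := by
    rw [key]
  -- simplify LHS of key2
  have hBPm : B⁻¹ * Pm = (p + b) • B⁻¹ - 1 := by
    have : Pm = (p + b) • (1 : Matrix (Fin N) (Fin N) ℂ) - B := by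
      rw [hPm, hB, add_smul]; abel
    rw [this, Matrix.mul_sub, Matrix.mul_smul, Matrix.mul_one,
      Matrix.nonsing_inv_mul B hBd]
  have hAPp : A⁻¹ * Pp = (p - a) • A⁻¹ + 1 := by
    have : Pp = (p - a) • (1 : Matrix (Fin N) (Fin N) ℂ) + A := by
      rw [hPp, hA, sub_smul]; abel
    rw [this, Matrix.mul_add, Matrix.mul_smul, Matrix.mul_one,
      Matrix.nonsing_inv_mul A hAd]
  have lhs_eq : c ⬝ᵥ ((B⁻¹ * (1 + M)⁻¹).mulVec (((1 + M) * Pm).mulVec x))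
      = (p + b) * (c ⬝ᵥ (B⁻¹.mulVec x)) - t := by
    rw [Matrix.mulVec_mulVec, Matrix.mul_assoc (B⁻¹) _ _, ← Matrix.mul_assoc (1+M)⁻¹ _ _,
      Matrix.nonsing_inv_mul _ hMd, Matrix.one_mul, hBPm, Matrix.sub_mulVec,
      Matrix.smul_mulVec, Matrix.one_mulVec, dotProduct_sub, dotProduct_smul,
      smul_eq_mul, ht]
  -- simplify RHS of key2
  have rhs_eq : c ⬝ᵥ ((B⁻¹ * (1 + M)⁻¹).mulVec (A⁻¹.mulVec (Pp.mulVec r) - t • r))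
      = (p - a) * S M r + (c ⬝ᵥ ((B⁻¹ * (1 + M)⁻¹).mulVec r))
        - t * (c ⬝ᵥ ((B⁻¹ * (1 + M)⁻¹).mulVec r)) := by
    rw [Matrix.mulVec_sub, Matrix.mulVec_smul, dotProduct_sub, dotProduct_smul, smul_eq_mul,
      Matrix.mulVec_mulVec, Matrix.mulVec_mulVec, Matrix.mul_assoc (B⁻¹ * (1 + M)⁻¹) A⁻¹ Pp,
      hAPp, Matrix.mul_add, Matrix.mul_one, Matrix.mul_smul, Matrix.add_mulVec,
      Matrix.smul_mulVec, dotProduct_add, dotProduct_smul, smul_eq_mul]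
  -- V b and its symmetric form
  have hVb : c ⬝ᵥ ((B⁻¹ * (1 + M)⁻¹).mulVec r) = 1 - V b M r := by
    have := hVsym b (by simp)
    simp only [V]
    rw [← this]
    ring
  -- identify S Mt rt and V a Mt rt with x, t
  have hSt : S Mt rt = c ⬝ᵥ (B⁻¹.mulVec x) := by
    simp only [S, hx, Matrix.mulVec_mulVec, Matrix.mul_assoc]
    rfl
  have hVa : V a Mt rt = 1 - t := by
    simp only [V, ht, hx, Matrix.mulVec_mulVec]
    rfl
  rw [hSt, hVa]
  rw [lhs_eq, rhs_eq, hVb] at key2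
  -- now a scalar computation
  linear_combination -key2
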